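/- Let A be an N×N unitary matrix with constant first row 1/√N, and define the operators S_i on L²[0,1] by (S_i f)(x) = m_i(x) f(Nx mod 1) where m_i = √N Σ_j a_{ij} χ_{[j/N,(j+1)/N)}. Then Σ_{i=0}^{N-1} S_i S_i* = I on L²[0,1]. -/

import Mathlib

open MeasureTheory
open Set

/-- The filter functions `m_i(x) = √N ∑_j a_{ij} χ_{[j/N,(j+1)/N)}(x)`. -/
noncomputable def walshFilter {N : ℕ} (A : Matrix (Fin N) (Fin N) ℂ) (i : Fin N) (x : ℝ) : ℂ :=
  Real.sqrt N *
    ∑ j : Fin N, A i j *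
      Set.indicator (Set.Ico ((j : ℝ) / N) (((j : ℝ) + 1) / N)) (fun _ => (1 : ℂ)) x

/-- The operator `(S_i f)(x) = m_i(x) f(Nx mod 1)` at the level of functions. -/
noncomputable def walshOp {N : ℕ} (A : Matrix (Fin N) (Fin N) ℂ) (i : Fin N)
    (f : ℝ → ℂ) (x : ℝ) : ℂ :=
  walshFilter A i x * f (Int.fract (N * x))

lemma vol_preimage_affine_null {c : ℝ} (hc : c ≠ 0) (d : ℝ) {E : Set ℝ}
    (hE : volume E = 0) : volume ((fun x => c * x + d) ⁻¹' E) = 0 := by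
  have h1 : (fun x : ℝ => c * x + d) ⁻¹' E = (c * ·) ⁻¹' ((· + d) ⁻¹' E) := rfl
  rw [h1, Real.volume_preimage_mul_left hc, measure_preimage_add_right, hE, mul_zero]

lemma map_affine_vol {c : ℝ} (hc : c ≠ 0) (d : ℝ) :
    Measure.map (fun y : ℝ => c * y + d) volume = ENNReal.ofReal |c⁻¹| • volume := by
  have h1 : (fun y : ℝ => c * y + d) = (· + d) ∘ (c * ·) := rfl
  rw [h1, ← Measure.map_map (measurable_add_const d) (measurable_const_mul c),
    Real.map_volume_mul_left hc]
  simp [Measure.map_smul, map_add_right_eq_self]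

lemma memLp_comp_affine {g : ℝ → ℂ} {c d : ℝ} (hc : c ≠ 0) {s t : Set ℝ}
    (ht : MeasurableSet t) (hst : (fun x => c * x + d) ⁻¹' t = s)
    (hg : MemLp g 2 (volume.restrict t)) :
    MemLp (fun x => g (c * x + d)) 2 (volume.restrict s) := by
  have hmap : Measure.map (fun y : ℝ => c * y + d) (volume.restrict s)
      = ENNReal.ofReal |c⁻¹| • volume.restrict t := by
    rw [← hst, ← Measure.restrict_map (by fun_prop) ht, map_affine_vol hc,
      Measure.restrict_smul]
  have hg' : MemLp g 2 (ENNReal.ofReal |c⁻¹| • volume.restrict t) :=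
    hg.smul_measure (by simp)
  rw [← hmap] at hg'
  have := (memLp_map_measure_iff (hg'.1) (by fun_prop)).mp hg'
  exact this

noncomputable def walshAdj {N : ℕ} (A : Matrix (Fin N) (Fin N) ℂ) (i : Fin N)
    (f : ℝ → ℂ) (y : ℝ) : ℂ :=
  (((Real.sqrt N : ℝ) : ℂ))⁻¹ * ∑ k : Fin N, (starRingEnd ℂ) (A i k) * f ((y + (k : ℕ)) / N)

lemma Npos {N : ℕ} (hN : 2 ≤ N) : (0:ℝ) < N := by positivity

lemma memLp_ek {N : ℕ} (hN : 2 ≤ N) {f : ℝ → ℂ}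
    (hf : MemLp f 2 (volume.restrict (Icc (0:ℝ) 1))) (k : Fin N) :
    MemLp (fun y => f ((y + (k:ℕ)) / N)) 2 (volume.restrict (Icc (0:ℝ) 1)) := by
  have hNpos : (0:ℝ) < N := Npos hN
  have hsub : Icc ((k:ℝ)/N) (((k:ℝ)+1)/N) ⊆ Icc (0:ℝ) 1 := by
    apply Icc_subset_Icc
    · positivity
    · rw [div_le_one hNpos]
      have : ((k:ℕ):ℝ) + 1 ≤ (N:ℝ) := by
        have := k.isLt; exact_mod_cast this
      exact this
  have hg : MemLp f 2 (volume.restrict (Icc ((k:ℝ)/N) (((k:ℝ)+1)/N))) :=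
    hf.mono_measure (Measure.restrict_mono hsub le_rfl)
  have hst : (fun x : ℝ => (N:ℝ)⁻¹ * x + ((k:ℕ):ℝ)/N) ⁻¹' Icc (((k:ℕ):ℝ)/N) ((((k:ℕ):ℝ)+1)/N)
      = Icc (0:ℝ) 1 := by
    have harith : ∀ y : ℝ, (N:ℝ)⁻¹ * y + ((k:ℕ):ℝ)/N = (y + ((k:ℕ):ℝ))/N := by
      intro y; field_simp
    ext y
    simp only [mem_preimage, mem_Icc, harith]
    rw [div_le_div_iff₀ hNpos hNpos, div_le_div_iff₀ hNpos hNpos]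
    constructor
    · rintro ⟨h1, h2⟩; constructor <;> nlinarith
    · rintro ⟨h1, h2⟩; constructor <;> nlinarith
  have key := memLp_comp_affine (c := (N:ℝ)⁻¹) (d := ((k:ℕ):ℝ)/N)
    (by positivity) measurableSet_Icc hst hg
  have heq : (fun y : ℝ => f ((y + (k:ℕ)) / N)) = fun x => f ((N:ℝ)⁻¹ * x + ((k:ℕ):ℝ)/N) := by
    funext x; congr 1; field_simp
  rw [heq]; exact key

lemma memLp_scaled {N : ℕ} (hN : 2 ≤ N) {g : ℝ → ℂ}
    (hg : MemLp g 2 (volume.restrict (Icc (0:ℝ) 1))) (j : Fin N) :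
    MemLp (fun x => g ((N:ℝ) * x - ((j:ℕ):ℝ)))
      2 (volume.restrict (Icc (((j:ℕ):ℝ)/N) ((((j:ℕ):ℝ)+1)/N))) := by
  have hNpos : (0:ℝ) < N := Npos hN
  have hst : (fun x : ℝ => (N:ℝ) * x + (-((j:ℕ):ℝ))) ⁻¹' Icc (0:ℝ) 1
      = Icc (((j:ℕ):ℝ)/N) ((((j:ℕ):ℝ)+1)/N) := by
    ext y
    simp only [mem_preimage, mem_Icc, le_div_iff₀ hNpos, div_le_iff₀ hNpos]
    constructor
    · rintro ⟨h1, h2⟩; constructor <;> nlinarith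
    · rintro ⟨h1, h2⟩; constructor <;> nlinarith
  have key := memLp_comp_affine (c := (N:ℝ)) (d := -((j:ℕ):ℝ))
    (ne_of_gt hNpos) measurableSet_Icc hst hg
  have heq : (fun x : ℝ => g ((N:ℝ) * x - ((j:ℕ):ℝ)))
      = fun x => g ((N:ℝ) * x + (-((j:ℕ):ℝ))) := by
    funext x; ring_nf
  rw [heq]; exact key

lemma memLp_conj {α : Type*} [MeasurableSpace α] {μ : Measure α} {f : α → ℂ}
    (hf : MemLp f 2 μ) : MemLp (fun x => (starRingEnd ℂ) (f x)) 2 μ := by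
  have h : (fun x => (starRingEnd ℂ) (f x)) = fun x => star (f x) := rfl
  rw [h]
  refine hf.of_le (continuous_star.comp_aestronglyMeasurable hf.1) ?_
  filter_upwards with x
  simp

lemma integrable_mul_L2 {α : Type*} [MeasurableSpace α] {μ : Measure α} {f g : α → ℂ}
    (hf : MemLp f 2 μ) (hg : MemLp g 2 μ) :
    Integrable (fun x => f x * g x) μ := by
  have h12 : (1 : ENNReal) / 1 = 1 / 2 + 1 / 2 := by
    rw [ENNReal.div_add_div_same, one_add_one_eq_two, ENNReal.div_self two_ne_zero
      ENNReal.ofNat_ne_top, div_one]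
  have h := hg.smul (φ := f) hf (r := 1)
  rw [← memLp_one_iff_integrable]
  exact h

lemma memLp_walshAdj {N : ℕ} (hN : 2 ≤ N) (A : Matrix (Fin N) (Fin N) ℂ) (i : Fin N)
    {f : ℝ → ℂ} (hf : MemLp f 2 (volume.restrict (Icc (0:ℝ) 1))) :
    MemLp (walshAdj A i f) 2 (volume.restrict (Icc (0:ℝ) 1)) := by
  unfold walshAdj
  apply MemLp.const_mul
  apply memLp_finset_sum
  intro k _
  exact (memLp_ek hN hf k).const_mul _

lemma sub_lemma {N : ℕ} (hN : 2 ≤ N) (φ : ℝ → ℂ) (j : Fin N) :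
    ∫ x in Ico (((j:ℕ):ℝ)/N) ((((j:ℕ):ℝ)+1)/N), φ ((N:ℝ) * x - ((j:ℕ):ℝ))
      = (N:ℝ)⁻¹ • ∫ y in Icc (0:ℝ) 1, φ y := by
  have hNpos : (0:ℝ) < N := Npos hN
  have hb0 : (N:ℝ) * (((j:ℕ):ℝ)/N) + (-((j:ℕ):ℝ)) = 0 := by field_simp; ring
  have hb1 : (N:ℝ) * ((((j:ℕ):ℝ)+1)/N) + (-((j:ℕ):ℝ)) = 1 := by field_simp; ring
  have hle : (((j:ℕ):ℝ)/N) ≤ ((((j:ℕ):ℝ)+1)/N) := by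
    gcongr
    · linarith
  calc ∫ x in Ico (((j:ℕ):ℝ)/N) ((((j:ℕ):ℝ)+1)/N), φ ((N:ℝ) * x - ((j:ℕ):ℝ))
      = ∫ x in Ioc (((j:ℕ):ℝ)/N) ((((j:ℕ):ℝ)+1)/N), φ ((N:ℝ) * x + (-((j:ℕ):ℝ))) := by
        rw [integral_Ico_eq_integral_Ioo, ← integral_Ioc_eq_integral_Ioo]
        simp_rw [sub_eq_add_neg]
    _ = ∫ x in (((j:ℕ):ℝ)/N)..((((j:ℕ):ℝ)+1)/N), φ ((N:ℝ) * x + (-((j:ℕ):ℝ))) := by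
        rw [intervalIntegral.integral_of_le hle]
    _ = (N:ℝ)⁻¹ • ∫ y in (0:ℝ)..1, φ y := by
        rw [intervalIntegral.integral_comp_mul_add φ (ne_of_gt hNpos), hb0, hb1]
    _ = (N:ℝ)⁻¹ • ∫ y in Icc (0:ℝ) 1, φ y := by
        rw [intervalIntegral.integral_of_le (by norm_num : (0:ℝ) ≤ 1),
          ← integral_Icc_eq_integral_Ioc]

lemma fract_on_Ico {N : ℕ} (hN : 2 ≤ N) (j : Fin N) {x : ℝ}
    (hx : x ∈ Ico (((j:ℕ):ℝ)/N) ((((j:ℕ):ℝ)+1)/N)) :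
    Int.fract ((N:ℝ) * x) = (N:ℝ) * x - ((j:ℕ):ℝ) := by
  have hNpos : (0:ℝ) < N := Npos hN
  obtain ⟨h1, h2⟩ := hx
  rw [div_le_iff₀ hNpos] at h1
  rw [lt_div_iff₀ hNpos] at h2
  have hfloor : ⌊(N:ℝ) * x⌋ = ((j:ℕ) : ℤ) := by
    rw [Int.floor_eq_iff]
    constructor
    · push_cast; linarith
    · push_cast; linarith
  rw [Int.fract, hfloor]
  push_cast; ring

lemma adjoint_repr {N : ℕ} (hN : 2 ≤ N) (A : Matrix (Fin N) (Fin N) ℂ) (i : Fin N)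
    (f g : ℝ → ℂ) (hf : MemLp f 2 (volume.restrict (Icc (0:ℝ) 1)))
    (hg : MemLp g 2 (volume.restrict (Icc (0:ℝ) 1))) :
    ∫ x in Icc (0:ℝ) 1, (starRingEnd ℂ) (walshAdj A i f x) * g x
      = ∫ x in Icc (0:ℝ) 1, (starRingEnd ℂ) (f x) * walshOp A i g x := by
  have hNpos : (0:ℝ) < N := Npos hN
  have hsqrt_pos : (0:ℝ) < Real.sqrt N := Real.sqrt_pos.mpr hNpos
  have hIcoIcc : ∀ j : Fin N, Ico (((j:ℕ):ℝ)/N) ((((j:ℕ):ℝ)+1)/N) ⊆ Icc (0:ℝ) 1 := by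
    intro j x hx
    have hj1 : ((j:ℕ):ℝ) + 1 ≤ N := by exact_mod_cast j.isLt
    obtain ⟨h1, h2⟩ := hx
    have h3 : (0:ℝ) ≤ ((j:ℕ):ℝ)/N := by positivity
    have h4 : ((((j:ℕ):ℝ)+1)/N) ≤ 1 := by rw [div_le_one hNpos]; exact hj1
    exact ⟨by linarith, by linarith⟩
  have hL : ∫ x in Icc (0:ℝ) 1, (starRingEnd ℂ) (walshAdj A i f x) * g x
      = ∑ k : Fin N, ((Real.sqrt N : ℝ) : ℂ)⁻¹ * A i k *
          ∫ x in Icc (0:ℝ) 1, (starRingEnd ℂ) (f ((x + (k:ℕ))/N)) * g x := by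
    have hpt : ∀ x : ℝ, (starRingEnd ℂ) (walshAdj A i f x) * g x
        = ∑ k : Fin N, ((Real.sqrt N : ℝ) : ℂ)⁻¹ * A i k *
            ((starRingEnd ℂ) (f ((x + (k:ℕ))/N)) * g x) := by
      intro x
      simp only [walshAdj, map_mul, map_sum, map_inv₀, Complex.conj_conj, Complex.conj_ofReal]
      rw [mul_assoc, Finset.sum_mul, Finset.mul_sum]
      exact Finset.sum_congr rfl fun k _ => by ring
    simp_rw [hpt]
    rw [integral_finset_sum]
    · exact Finset.sum_congr rfl fun k _ => integral_const_mul _ _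
    · intro k _
      exact (integrable_mul_L2 (memLp_conj (memLp_ek hN hf k)) hg).const_mul _
  have hR : ∫ x in Icc (0:ℝ) 1, (starRingEnd ℂ) (f x) * walshOp A i g x
      = ∑ j : Fin N, ((Real.sqrt N : ℝ) : ℂ) * A i j * ((N:ℝ)⁻¹ •
          ∫ y in Icc (0:ℝ) 1, (starRingEnd ℂ) (f ((y + (j:ℕ))/N)) * g y) := by
    have hpt : ∀ x : ℝ, (starRingEnd ℂ) (f x) * walshOp A i g x
        = ∑ j : Fin N, Set.indicator (Ico (((j:ℕ):ℝ)/N) ((((j:ℕ):ℝ)+1)/N))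
            (fun y => ((Real.sqrt N : ℝ):ℂ) * A i j *
              ((starRingEnd ℂ) (f y) * g ((N:ℝ) * y - ((j:ℕ):ℝ)))) x := by
      intro x
      simp only [walshOp, walshFilter]
      rw [Finset.mul_sum, Finset.sum_mul, Finset.mul_sum]
      refine Finset.sum_congr rfl fun j _ => ?_
      by_cases hx : x ∈ Ico (((j:ℕ):ℝ)/N) ((((j:ℕ):ℝ)+1)/N)
      · rw [Set.indicator_of_mem hx, Set.indicator_of_mem hx, fract_on_Ico hN j hx]
        ring
      · rw [Set.indicator_of_notMem hx, Set.indicator_of_notMem hx]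
        simp
    simp_rw [hpt]
    rw [integral_finset_sum]
    · refine Finset.sum_congr rfl fun j _ => ?_
      rw [integral_indicator measurableSet_Ico, Measure.restrict_restrict measurableSet_Ico,
        inter_eq_self_of_subset_left (hIcoIcc j), integral_const_mul]
      congr 1
      have hcv : ∀ x : ℝ, (starRingEnd ℂ) (f x) * g ((N:ℝ)*x - ((j:ℕ):ℝ))
          = (fun y => (starRingEnd ℂ) (f ((y + (j:ℕ))/N)) * g y) ((N:ℝ)*x - ((j:ℕ):ℝ)) := by
        intro x
        simp only
        congr 3
        field_simp
        ring
      simp_rw [hcv]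
      exact sub_lemma hN (fun y => (starRingEnd ℂ) (f ((y + ((j:ℕ):ℝ))/N)) * g y) j
    · intro j _
      rw [integrable_indicator_iff measurableSet_Ico]
      unfold IntegrableOn
      rw [Measure.restrict_restrict measurableSet_Ico,
        inter_eq_self_of_subset_left (hIcoIcc j)]
      refine (integrable_mul_L2 (memLp_conj ?_) ?_).const_mul _
      · exact hf.mono_measure (Measure.restrict_mono (hIcoIcc j) le_rfl)
      · exact (memLp_scaled hN hg j).mono_measure
          (Measure.restrict_mono Ico_subset_Icc_self le_rfl)
  rw [hL, hR]
  refine Finset.sum_congr rfl fun k _ => ?_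
  rw [Complex.real_smul]
  have hsq : ((Real.sqrt N : ℝ):ℂ) * ((Real.sqrt N : ℝ):ℂ) = ((N:ℝ):ℂ) := by
    rw [← Complex.ofReal_mul, Real.mul_self_sqrt hNpos.le]
  have hne : ((Real.sqrt N : ℝ):ℂ) ≠ 0 := by
    simpa using ne_of_gt hsqrt_pos
  have hNne : ((N:ℝ):ℂ) ≠ 0 := by
    simpa using ne_of_gt hNpos
  rw [Complex.ofReal_inv, ← hsq, mul_inv]
  field_simp

lemma unique_adj {N : ℕ} (hN : 2 ≤ N) (A : Matrix (Fin N) (Fin N) ℂ) (i : Fin N)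
    (f h : ℝ → ℂ) (hf : MemLp f 2 (volume.restrict (Icc (0:ℝ) 1)))
    (hh : MemLp h 2 (volume.restrict (Icc (0:ℝ) 1)))
    (hadj : ∀ g, MemLp g 2 (volume.restrict (Icc (0:ℝ) 1)) →
      ∫ x in Icc (0:ℝ) 1, (starRingEnd ℂ) (h x) * g x
        = ∫ x in Icc (0:ℝ) 1, (starRingEnd ℂ) (f x) * walshOp A i g x) :
    h =ᵐ[volume.restrict (Icc (0:ℝ) 1)] walshAdj A i f := by
  have hW : MemLp (walshAdj A i f) 2 (volume.restrict (Icc (0:ℝ) 1)) :=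
    memLp_walshAdj hN A i hf
  have hφ : MemLp (fun x => h x - walshAdj A i f x) 2 (volume.restrict (Icc (0:ℝ) 1)) :=
    hh.sub hW
  have e1 := hadj _ hφ
  have e2 := adjoint_repr hN A i f _ hf hφ
  have int1 : Integrable (fun x => (starRingEnd ℂ) (h x) * (h x - walshAdj A i f x))
      (volume.restrict (Icc (0:ℝ) 1)) := integrable_mul_L2 (memLp_conj hh) hφ
  have int2 : Integrable
      (fun x => (starRingEnd ℂ) (walshAdj A i f x) * (h x - walshAdj A i f x))
      (volume.restrict (Icc (0:ℝ) 1)) := integrable_mul_L2 (memLp_conj hW) hφ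
  have e4 : ∫ x in Icc (0:ℝ) 1, ((starRingEnd ℂ) (h x) * (h x - walshAdj A i f x)
      - (starRingEnd ℂ) (walshAdj A i f x) * (h x - walshAdj A i f x)) = 0 := by
    rw [integral_sub int1 int2, e1, e2, sub_self]
  have hzero : ∫ x in Icc (0:ℝ) 1,
      (starRingEnd ℂ) (h x - walshAdj A i f x) * (h x - walshAdj A i f x) = 0 := by
    rw [← e4]
    refine integral_congr_ae (Filter.Eventually.of_forall fun x => ?_)
    simp only [map_sub]
    ring
  have hptnorm : ∀ x : ℝ, (starRingEnd ℂ) (h x - walshAdj A i f x) *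
      (h x - walshAdj A i f x) = ((‖h x - walshAdj A i f x‖^2 : ℝ) : ℂ) := by
    intro x
    rw [mul_comm, Complex.mul_conj]
    simp [Complex.normSq_eq_norm_sq]
  have hint : Integrable (fun x => ‖h x - walshAdj A i f x‖^2)
      (volume.restrict (Icc (0:ℝ) 1)) := (memLp_two_iff_integrable_sq_norm hφ.1).mp hφ
  have hnorm : ∫ x in Icc (0:ℝ) 1, (‖h x - walshAdj A i f x‖^2 : ℝ) = 0 := by
    simp_rw [hptnorm] at hzero
    have hInt2 : Integrable (fun x => ((‖h x - walshAdj A i f x‖^2 : ℝ) : ℂ))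
        (volume.restrict (Icc (0:ℝ) 1)) := MeasureTheory.Integrable.ofReal hint
    have hre := integral_re hInt2
    rw [hzero] at hre
    simp only [RCLike.re_to_complex, Complex.ofReal_re, Complex.zero_re] at hre
    exact hre
  have haez := (integral_eq_zero_iff_of_nonneg (fun x => by positivity) hint).mp hnorm
  filter_upwards [haez] with x hx
  have hx' : ‖h x - walshAdj A i f x‖ ^ 2 = 0 := hx
  have : h x - walshAdj A i f x = 0 := by
    rwa [pow_eq_zero_iff two_ne_zero, norm_eq_zero] at hx'
  exact sub_eq_zero.mp this

lemma pointwise_sum {N : ℕ} (hN : 2 ≤ N) (A : Matrix (Fin N) (Fin N) ℂ)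
    (hA : A ∈ Matrix.unitaryGroup (Fin N) ℂ) (f : ℝ → ℂ) {x : ℝ} (hx : x ∈ Ico (0:ℝ) 1) :
    ∑ i : Fin N, walshOp A i (walshAdj A i f) x = f x := by
  have hNpos : (0:ℝ) < N := Npos hN
  have hne : ((Real.sqrt N : ℝ):ℂ) ≠ 0 := by
    simpa using ne_of_gt (Real.sqrt_pos.mpr hNpos)
  obtain ⟨hx0, hx1⟩ := hx
  have hfl0 : (0:ℤ) ≤ ⌊(N:ℝ)*x⌋ := Int.floor_nonneg.mpr (by positivity)
  have hflN : ⌊(N:ℝ)*x⌋ < (N:ℤ) := by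
    rw [Int.floor_lt]
    push_cast
    nlinarith
  set j : Fin N := ⟨⌊(N:ℝ)*x⌋.toNat, by omega⟩ with hj
  have hjval : ((j:ℕ):ℝ) = ((⌊(N:ℝ)*x⌋ : ℤ) : ℝ) := by
    simp only [hj]
    rw [← Int.toNat_of_nonneg hfl0]
    push_cast
    rfl
  have hxmem : x ∈ Ico (((j:ℕ):ℝ)/N) ((((j:ℕ):ℝ)+1)/N) := by
    rw [hjval]
    constructor
    · rw [div_le_iff₀ hNpos]
      have := Int.floor_le ((N:ℝ)*x)
      linarith [this]
    · rw [lt_div_iff₀ hNpos]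
      have := Int.lt_floor_add_one ((N:ℝ)*x)
      linarith [this]
  have hfract : Int.fract ((N:ℝ)*x) = (N:ℝ)*x - ((j:ℕ):ℝ) := fract_on_Ico hN j hxmem
  have hfilter : ∀ i : Fin N, walshFilter A i x = ((Real.sqrt N:ℝ):ℂ) * A i j := by
    intro i
    unfold walshFilter
    congr 1
    rw [Finset.sum_eq_single j]
    · rw [Set.indicator_of_mem hxmem, mul_one]
    · intro b _ hbj
      rw [Set.indicator_of_notMem, mul_zero]
      intro hmem
      have hb := fract_on_Ico hN b hmem
      apply hbj
      have hbr : ((b:ℕ):ℝ) = ((j:ℕ):ℝ) := by rw [hb] at hfract; linarith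
      have : (b:ℕ) = (j:ℕ) := by exact_mod_cast hbr
      exact Fin.ext this
    · intro hj'; exact absurd (Finset.mem_univ j) hj'
  have hunit : ∀ k : Fin N, (∑ i : Fin N, A i j * (starRingEnd ℂ) (A i k))
      = if k = j then 1 else 0 := by
    intro k
    have h1 : star A * A = 1 := hA.1
    have h2 : (star A * A) k j = (1 : Matrix (Fin N) (Fin N) ℂ) k j := by rw [h1]
    rw [Matrix.mul_apply, Matrix.one_apply] at h2
    calc ∑ i : Fin N, A i j * (starRingEnd ℂ) (A i k)
        = ∑ i : Fin N, (star A) k i * A i j := by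
          refine Finset.sum_congr rfl fun i2 _ => ?_
          rw [Matrix.star_apply]
          exact mul_comm _ _
      _ = if k = j then 1 else 0 := h2
  calc ∑ i : Fin N, walshOp A i (walshAdj A i f) x
      = ∑ i : Fin N, ∑ k : Fin N, (A i j * (starRingEnd ℂ) (A i k)) *
          f ((((N:ℝ)*x - ((j:ℕ):ℝ)) + ((k:ℕ):ℝ))/N) := by
        refine Finset.sum_congr rfl fun i2 _ => ?_
        simp only [walshOp, walshAdj, hfilter i2, hfract]
        rw [Finset.mul_sum, Finset.mul_sum]
        refine Finset.sum_congr rfl fun k _ => ?_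
        field_simp
    _ = ∑ k : Fin N, (∑ i : Fin N, A i j * (starRingEnd ℂ) (A i k)) *
          f ((((N:ℝ)*x - ((j:ℕ):ℝ)) + ((k:ℕ):ℝ))/N) := by
        rw [Finset.sum_comm]
        exact Finset.sum_congr rfl fun k _ => (Finset.sum_mul _ _ _).symm
    _ = f x := by
        simp_rw [hunit, ite_mul, one_mul, zero_mul]
        rw [Finset.sum_ite_eq' Finset.univ j
          (fun k => f ((((N:ℝ)*x - ((j:ℕ):ℝ)) + ((k:ℕ):ℝ))/N))]
        simp only [Finset.mem_univ, if_true]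
        congr 1
        field_simp
        ring

lemma ae_fract {N : ℕ} (hN : 2 ≤ N) {u v : ℝ → ℂ}
    (huv : u =ᵐ[volume.restrict (Icc (0:ℝ) 1)] v) :
    ∀ᵐ x ∂(volume.restrict (Icc (0:ℝ) 1)),
      u (Int.fract ((N:ℝ) * x)) = v (Int.fract ((N:ℝ) * x)) := by
  have hNpos : (0:ℝ) < N := Npos hN
  rw [Filter.EventuallyEq, ae_iff] at huv
  rw [ae_iff, Measure.restrict_apply' measurableSet_Icc]
  rw [Measure.restrict_apply' measurableSet_Icc] at huv
  set E := ({y | ¬ u y = v y} ∩ Icc (0:ℝ) 1) with hE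
  refine measure_mono_null (fun x hx => ?_)
    (measure_biUnion_null_iff (Finset.range (N+1)).countable_toSet |>.mpr
      (fun k _ => vol_preimage_affine_null (c := (N:ℝ)) (ne_of_gt hNpos) (-(k:ℝ)) huv))
  obtain ⟨hxE, hxI⟩ := hx
  have hm0 : (0:ℤ) ≤ ⌊(N:ℝ)*x⌋ := Int.floor_nonneg.mpr (by nlinarith [hxI.1])
  have hmN : ⌊(N:ℝ)*x⌋ ≤ (N:ℤ) := by
    have h1 : (N:ℝ)*x ≤ N := by nlinarith [hxI.2]
    calc ⌊(N:ℝ)*x⌋ ≤ ⌊(N:ℝ)⌋ := Int.floor_le_floor h1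
      _ = (N:ℤ) := Int.floor_natCast N
  have hk : ⌊(N:ℝ)*x⌋.toNat ∈ Finset.range (N+1) := Finset.mem_range.mpr (by omega)
  refine Set.mem_iUnion₂.mpr ⟨⌊(N:ℝ)*x⌋.toNat, Finset.mem_coe.mpr hk, ?_⟩
  simp only [Set.mem_preimage]
  have harg : (N:ℝ)*x + (-((⌊(N:ℝ)*x⌋.toNat : ℕ):ℝ)) = Int.fract ((N:ℝ)*x) := by
    rw [Int.fract]
    have hcast : ((⌊(N:ℝ)*x⌋.toNat : ℕ):ℝ) = ((⌊(N:ℝ)*x⌋ : ℤ):ℝ) := by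
      exact_mod_cast congrArg (Int.cast : ℤ → ℝ) (Int.toNat_of_nonneg hm0)
    rw [hcast]
    ring
  rw [harg]
  exact ⟨hxE, ⟨Int.fract_nonneg _, le_of_lt (Int.fract_lt_one _)⟩⟩

/-- `∑_i S_i S_i* = I` on `L²[0,1]`, expressed weakly: if `T_i` is (a
function-level representative of) the adjoint of `S_i`, i.e. `⟨T_i f, g⟩ = ⟨f, S_i g⟩`
for all `f, g ∈ L²[0,1]`, then `∑_i S_i (T_i f) = f` almost everywhere on `[0,1]`. -/
theorem stmt_1 {N : ℕ} (hN : 2 ≤ N) (A : Matrix (Fin N) (Fin N) ℂ)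
    (hA : A ∈ Matrix.unitaryGroup (Fin N) ℂ)
    (hrow : ∀ j, A ⟨0, by omega⟩ j = ((Real.sqrt N)⁻¹ : ℝ))
    (T : Fin N → (ℝ → ℂ) → (ℝ → ℂ))
    (hTmem : ∀ i f, MemLp f 2 (volume.restrict (Set.Icc (0 : ℝ) 1)) →
      MemLp (T i f) 2 (volume.restrict (Set.Icc (0 : ℝ) 1)))
    (hTadj : ∀ i f g, MemLp f 2 (volume.restrict (Set.Icc (0 : ℝ) 1)) →
      MemLp g 2 (volume.restrict (Set.Icc (0 : ℝ) 1)) →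
      ∫ x in Set.Icc (0 : ℝ) 1, (starRingEnd ℂ) (T i f x) * g x =
        ∫ x in Set.Icc (0 : ℝ) 1, (starRingEnd ℂ) (f x) * walshOp A i g x)
    (f : ℝ → ℂ) (hf : MemLp f 2 (volume.restrict (Set.Icc (0 : ℝ) 1))) :
    ∀ᵐ x ∂(volume.restrict (Set.Icc (0 : ℝ) 1)),
      ∑ i : Fin N, walshOp A i (T i f) x = f x := by
  have hTae : ∀ i : Fin N, T i f =ᵐ[volume.restrict (Icc (0:ℝ) 1)] walshAdj A i f :=
    fun i => unique_adj hN A i f (T i f) hf (hTmem i f hf) (fun g hg => hTadj i f g hf hg)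
  have hall : ∀ᵐ x ∂(volume.restrict (Icc (0:ℝ) 1)), ∀ i : Fin N,
      T i f (Int.fract ((N:ℝ)*x)) = walshAdj A i f (Int.fract ((N:ℝ)*x)) :=
    ae_all_iff.mpr fun i => ae_fract hN (hTae i)
  have hIco : ∀ᵐ x ∂(volume.restrict (Icc (0:ℝ) 1)), x ∈ Ico (0:ℝ) 1 := by
    have h1 : ∀ᵐ x ∂(volume.restrict (Icc (0:ℝ) 1)), x ∈ Icc (0:ℝ) 1 :=
      ae_restrict_mem measurableSet_Icc
    have h2 : ∀ᵐ x ∂(volume.restrict (Icc (0:ℝ) 1)), x ≠ 1 := by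
      rw [ae_iff, Measure.restrict_apply' measurableSet_Icc]
      refine measure_mono_null (t := {(1:ℝ)}) (fun y hy => ?_) Real.volume_singleton
      have : y = 1 := by simpa using hy.1
      exact Set.mem_singleton_iff.mpr this
    filter_upwards [h1, h2] with x h1x h2x
    exact ⟨h1x.1, lt_of_le_of_ne h1x.2 h2x⟩
  filter_upwards [hall, hIco] with x hallx hIcox
  calc ∑ i : Fin N, walshOp A i (T i f) x
      = ∑ i : Fin N, walshOp A i (walshAdj A i f) x := by
        refine Finset.sum_congr rfl fun i _ => ?_
        simp only [walshOp]
        rw [hallx i]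
    _ = f x := pointwise_sum hN A hA f hIcox
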